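/- arXiv:1110.3802 — 2 statements merged into one kernel-verified Lean document; each statement's English description precedes it below -/
import Mathlib

section
/- Let G' = G − (i,j) with parameter-dependent Hamiltonian H(G';α) = H(G) + B(i,j;α). (i) Suppose for some α ≠ 0 a normalized vector f satisfies H(G';α)f = λf, where λ is the m-th eigenvalue of H(G';α), f_i ≠ 0, and α = f_j/f_i. Then B(i,j;α)f = 0, f is an eigenvector of H(G) with eigenvalue λ, and λ occupies a position n in the nondecreasing spectrum of H(G) with n ∈ {m−1, m, m+1}. (ii) Conversely, if f^{(n)} is a non-degenerate eigenvector of H(G) then, with α⁺ = f^{(n)}_j/f^{(n)}_i, the vector f^{(n)} is an eigenvector of H(G';α⁺) with eigenvalue λ_n(G), and this eigenvalue occupies a position m in the spectrum of H(G';α⁺) with n ∈ {m−1, m, m+1}. -/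
open Matrix

open Classical in
/-- The discrete Schrödinger operator (Hamiltonian) `H(G) = -A(G) + Q` on the graph `G`
with potential `q`, given entrywise: `q a` on the diagonal, `-1` on adjacent pairs of
vertices, and `0` otherwise. -/
noncomputable def Ham {V : ℕ} (G : SimpleGraph (Fin V)) (q : Fin V → ℝ) :
    Matrix (Fin V) (Fin V) ℝ :=
  Matrix.of fun a b => if a = b then q a else if G.Adj a b then -1 else 0

/-- The perturbation matrix `B(i,j;α)`: its only (potentially) nonzero entries are
`B i i = -α`, `B j j = -1/α` and `B i j = B j i = 1`. -/
noncomputable def Bmat {V : ℕ} (i j : Fin V) (α : ℝ) : Matrix (Fin V) (Fin V) ℝ :=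
  Matrix.of fun a b =>
    (if a = i ∧ b = i then -α else 0) + (if a = j ∧ b = j then -1/α else 0) +
      (if (a = i ∧ b = j) ∨ (a = j ∧ b = i) then 1 else 0)

lemma Ham_isHermitian {V : ℕ} (G : SimpleGraph (Fin V)) (q : Fin V → ℝ) :
    (Ham G q).IsHermitian := by
  classical
  unfold Matrix.IsHermitian
  ext a b
  simp only [Matrix.conjTranspose_apply, Ham, Matrix.of_apply, star_trivial]
  by_cases h : a = b
  · subst h; simp
  · simp [h, Ne.symm h, SimpleGraph.adj_comm]

lemma Bmat_isHermitian {V : ℕ} (i j : Fin V) (α : ℝ) : (Bmat i j α).IsHermitian := by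
  unfold Matrix.IsHermitian
  ext a b
  simp only [Matrix.conjTranspose_apply, Bmat, Matrix.of_apply, star_trivial]
  by_cases hai : a = i <;> by_cases haj : a = j <;> by_cases hbi : b = i <;>
    by_cases hbj : b = j <;> simp [hai, haj, hbi, hbj]

/-- The eigenvalues of a Hermitian matrix, sorted in nondecreasing order and
counted with multiplicity; `sortedEigs hM k` is the `(k+1)`-st smallest eigenvalue. -/
noncomputable def sortedEigs {n : ℕ} {M : Matrix (Fin n) (Fin n) ℝ} (hM : M.IsHermitian) :
    Fin n → ℝ :=
  hM.eigenvalues ∘ Tuple.sort hM.eigenvalues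

section Aux
open Module

variable {N : ℕ} {M : Matrix (Fin N) (Fin N) ℝ}

lemma dot_mulVec_symm (hM : M.IsHermitian) (x y : Fin N → ℝ) :
    x ⬝ᵥ (M *ᵥ y) = (M *ᵥ x) ⬝ᵥ y := by
  rw [Matrix.dotProduct_mulVec, ← Matrix.mulVec_transpose]
  congr 1
  have : Mᵀ = M := by
    have := hM; unfold Matrix.IsHermitian at this
    simpa [Matrix.conjTranspose, Matrix.map, Matrix.transpose] using this
  rw [this]

lemma inner_eq_dot (x y : EuclideanSpace ℝ (Fin N)) :
    (inner ℝ x y : ℝ) = (x : Fin N → ℝ) ⬝ᵥ y := by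
  simp [PiLp.inner_apply, dotProduct, mul_comm]

lemma repr_mulVec (hM : M.IsHermitian) (x : EuclideanSpace ℝ (Fin N)) (k : Fin N) :
    hM.eigenvectorBasis.repr (WithLp.toLp 2 (M *ᵥ x) : EuclideanSpace ℝ (Fin N)) k
      = hM.eigenvalues k * hM.eigenvectorBasis.repr x k := by
  rw [OrthonormalBasis.repr_apply_apply, OrthonormalBasis.repr_apply_apply,
    inner_eq_dot, inner_eq_dot, WithLp.ofLp_toLp, dot_mulVec_symm hM]
  have h := hM.mulVec_eigenvectorBasis k
  erw [h]
  rw [smul_dotProduct]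
  rfl

lemma quad_eq_sum (hM : M.IsHermitian) (x : EuclideanSpace ℝ (Fin N)) :
    (x : Fin N → ℝ) ⬝ᵥ (M *ᵥ x) = ∑ k, hM.eigenvalues k * (hM.eigenvectorBasis.repr x k)^2 := by
  rw [← inner_eq_dot x (WithLp.toLp 2 (M *ᵥ x) : EuclideanSpace ℝ (Fin N))]
  rw [← LinearIsometryEquiv.inner_map_map hM.eigenvectorBasis.repr x _]
  rw [inner_eq_dot]
  simp only [dotProduct]
  refine Finset.sum_congr rfl fun k _ => ?_
  have := repr_mulVec hM x k
  erw [this]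
  ring

lemma normsq_eq_sum (hM : M.IsHermitian) (x : EuclideanSpace ℝ (Fin N)) :
    (x : Fin N → ℝ) ⬝ᵥ x = ∑ k, (hM.eigenvectorBasis.repr x k)^2 := by
  rw [← inner_eq_dot x x, ← LinearIsometryEquiv.inner_map_map hM.eigenvectorBasis.repr x x,
    inner_eq_dot]
  simp [dotProduct, sq]

-- eigenvalue extraction
lemma exists_eigenvalue_of (hM : M.IsHermitian) {f : Fin N → ℝ} {μ : ℝ}
    (hf : f ≠ 0) (h : M *ᵥ f = μ • f) : ∃ k, hM.eigenvalues k = μ := by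
  have hfE : (WithLp.toLp 2 f : EuclideanSpace ℝ (Fin N)) ≠ 0 := by simpa using hf
  have : hM.eigenvectorBasis.repr (WithLp.toLp 2 f : EuclideanSpace ℝ (Fin N)) ≠ 0 := by
    intro h0
    exact hfE (hM.eigenvectorBasis.repr.map_eq_zero_iff.mp h0)
  obtain ⟨k, hk⟩ := Function.ne_iff.1 (show (hM.eigenvectorBasis.repr (WithLp.toLp 2 f)).ofLp ≠ 0 from
    fun h0 => this (by simpa using congrArg (WithLp.toLp 2) h0))
  refine ⟨k, ?_⟩
  have h1 := repr_mulVec hM (WithLp.toLp 2 f : EuclideanSpace ℝ (Fin N)) k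
  rw [WithLp.ofLp_toLp, h] at h1
  have h2 : hM.eigenvectorBasis.repr (WithLp.toLp 2 (μ • f) : EuclideanSpace ℝ (Fin N)) k
      = μ * hM.eigenvectorBasis.repr (WithLp.toLp 2 f : EuclideanSpace ℝ (Fin N)) k := by
    have : (WithLp.toLp 2 (μ • f) : EuclideanSpace ℝ (Fin N)) = μ • (WithLp.toLp 2 f : EuclideanSpace ℝ (Fin N)) := rfl
    rw [this, _root_.map_smul]
    rfl
  rw [h2] at h1
  have hk' : hM.eigenvectorBasis.repr (WithLp.toLp 2 f : EuclideanSpace ℝ (Fin N)) k ≠ 0 := by simpa using hk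
  exact mul_right_cancel₀ hk' h1.symm

noncomputable def eigSpan (hM : M.IsHermitian) (p : Fin N → Prop) :
    Submodule ℝ (EuclideanSpace ℝ (Fin N)) :=
  Submodule.span ℝ (hM.eigenvectorBasis '' {k | p k})

lemma finrank_eigSpan (hM : M.IsHermitian) (p : Fin N → Prop) [DecidablePred p] :
    finrank ℝ (eigSpan hM p) = (Finset.univ.filter fun k => p k).card := by
  classical
  have hli : LinearIndependent ℝ (fun k : {k // p k} => hM.eigenvectorBasis k) :=
    (hM.eigenvectorBasis.orthonormal.linearIndependent).comp Subtype.val Subtype.val_injective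
  have himg : Set.range (fun k : {k // p k} => hM.eigenvectorBasis k)
      = hM.eigenvectorBasis '' {k | p k} := by
    ext y; simp [Set.range, Set.mem_image]
  rw [eigSpan, ← himg, finrank_span_eq_card hli, Fintype.card_subtype]

lemma repr_eq_zero_of_mem_eigSpan (hM : M.IsHermitian) {p : Fin N → Prop}
    {x : EuclideanSpace ℝ (Fin N)} (hx : x ∈ eigSpan hM p) {k : Fin N} (hk : ¬ p k) :
    hM.eigenvectorBasis.repr x k = 0 := by
  rw [OrthonormalBasis.repr_apply_apply]
  have hle : eigSpan hM p ≤ (ℝ ∙ (hM.eigenvectorBasis k))ᗮ := by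
    rw [eigSpan, Submodule.span_le]
    rintro y ⟨k', hk', rfl⟩
    rw [SetLike.mem_coe, Submodule.mem_orthogonal_singleton_iff_inner_right]
    have : k ≠ k' := fun h => hk (h ▸ hk')
    exact hM.eigenvectorBasis.orthonormal.2 (fun h => this h)
  have := hle hx
  rw [Submodule.mem_orthogonal_singleton_iff_inner_left] at this
  rw [real_inner_comm]
  exact this

lemma sum_sq_le_of {c lam : Fin N → ℝ} {t : ℝ} (h : ∀ k, c k ≠ 0 → lam k ≤ t) :
    ∑ k, lam k * c k ^ 2 ≤ t * ∑ k, c k ^ 2 := by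
  rw [Finset.mul_sum]
  refine Finset.sum_le_sum fun k _ => ?_
  by_cases hc : c k = 0
  · simp [hc]
  · have := h k hc
    nlinarith [sq_nonneg (c k), pow_pos (abs_pos.mpr hc) 2, sq_abs (c k)]

lemma sum_sq_lt_of {c lam : Fin N → ℝ} {t : ℝ} (h : ∀ k, c k ≠ 0 → lam k < t)
    (hc : c ≠ 0) : ∑ k, lam k * c k ^ 2 < t * ∑ k, c k ^ 2 := by
  obtain ⟨k0, hk0⟩ := Function.ne_iff.1 hc
  have hk0' : c k0 ≠ 0 := by simpa using hk0
  rw [Finset.mul_sum]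
  refine Finset.sum_lt_sum (fun k _ => ?_) ⟨k0, Finset.mem_univ _, ?_⟩
  · by_cases hck : c k = 0
    · simp [hck]
    · have := h k hck; nlinarith [pow_pos (abs_pos.mpr hck) 2, sq_abs (c k)]
  · have := h k0 hk0'; nlinarith [pow_pos (abs_pos.mpr hk0') 2, sq_abs (c k0)]

lemma sum_sq_ge_of {c lam : Fin N → ℝ} {t : ℝ} (h : ∀ k, c k ≠ 0 → t ≤ lam k) :
    t * ∑ k, c k ^ 2 ≤ ∑ k, lam k * c k ^ 2 := by
  rw [Finset.mul_sum]
  refine Finset.sum_le_sum fun k _ => ?_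
  by_cases hc : c k = 0
  · simp [hc]
  · have := h k hc; nlinarith [pow_pos (abs_pos.mpr hc) 2, sq_abs (c k)]

lemma sum_sq_gt_of {c lam : Fin N → ℝ} {t : ℝ} (h : ∀ k, c k ≠ 0 → t < lam k)
    (hc : c ≠ 0) : t * ∑ k, c k ^ 2 < ∑ k, lam k * c k ^ 2 := by
  obtain ⟨k0, hk0⟩ := Function.ne_iff.1 hc
  have hk0' : c k0 ≠ 0 := by simpa using hk0
  rw [Finset.mul_sum]
  refine Finset.sum_lt_sum (fun k _ => ?_) ⟨k0, Finset.mem_univ _, ?_⟩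
  · by_cases hck : c k = 0
    · simp [hck]
    · have := h k hck; nlinarith [pow_pos (abs_pos.mpr hck) 2, sq_abs (c k)]
  · have := h k0 hk0'; nlinarith [pow_pos (abs_pos.mpr hk0') 2, sq_abs (c k0)]

lemma repr_ne_zero (hM : M.IsHermitian) {x : EuclideanSpace ℝ (Fin N)} (hx0 : x ≠ 0) :
    (fun k => hM.eigenvectorBasis.repr x k) ≠ 0 := by
  intro h0
  apply hx0
  have : hM.eigenvectorBasis.repr x = 0 := by ext k; exact congrFun h0 k
  simpa using hM.eigenvectorBasis.repr.injective (by simp [this])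

open Finset in
noncomputable def cLT (hM : M.IsHermitian) (t : ℝ) : ℕ :=
  (Finset.univ.filter fun k => hM.eigenvalues k < t).card

open Finset in
noncomputable def cLE (hM : M.IsHermitian) (t : ℝ) : ℕ :=
  (Finset.univ.filter fun k => hM.eigenvalues k ≤ t).card

section QuadBounds
variable (hM : M.IsHermitian) {t : ℝ} {x : EuclideanSpace ℝ (Fin N)}

lemma quad_lt_of_mem (hx : x ∈ eigSpan hM (fun k => hM.eigenvalues k < t)) (hx0 : x ≠ 0) :
    (x : Fin N → ℝ) ⬝ᵥ (M *ᵥ x) < t * ((x : Fin N → ℝ) ⬝ᵥ x) := by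
  rw [quad_eq_sum hM, normsq_eq_sum hM]
  refine sum_sq_lt_of (fun k hk => ?_) ?_
  · by_contra hlt
    exact hk (repr_eq_zero_of_mem_eigSpan hM hx hlt)
  · exact repr_ne_zero hM hx0

lemma quad_le_of_mem (hx : x ∈ eigSpan hM (fun k => hM.eigenvalues k ≤ t)) :
    (x : Fin N → ℝ) ⬝ᵥ (M *ᵥ x) ≤ t * ((x : Fin N → ℝ) ⬝ᵥ x) := by
  rw [quad_eq_sum hM, normsq_eq_sum hM]
  refine sum_sq_le_of (fun k hk => ?_)
  by_contra hlt
  exact hk (repr_eq_zero_of_mem_eigSpan hM hx hlt)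

lemma quad_ge_of_mem (hx : x ∈ eigSpan hM (fun k => ¬ hM.eigenvalues k < t)) :
    t * ((x : Fin N → ℝ) ⬝ᵥ x) ≤ (x : Fin N → ℝ) ⬝ᵥ (M *ᵥ x) := by
  rw [quad_eq_sum hM, normsq_eq_sum hM]
  refine sum_sq_ge_of (fun k hk => ?_)
  by_contra hlt
  exact hk (repr_eq_zero_of_mem_eigSpan hM hx (fun h => hlt (not_lt.1 h)))

lemma quad_gt_of_mem (hx : x ∈ eigSpan hM (fun k => ¬ hM.eigenvalues k ≤ t)) (hx0 : x ≠ 0) :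
    t * ((x : Fin N → ℝ) ⬝ᵥ x) < (x : Fin N → ℝ) ⬝ᵥ (M *ᵥ x) := by
  rw [quad_eq_sum hM, normsq_eq_sum hM]
  refine sum_sq_gt_of (fun k hk => ?_) ?_
  · by_contra hlt
    exact hk (repr_eq_zero_of_mem_eigSpan hM hx (fun h => hlt (not_le.1 h)))
  · exact repr_ne_zero hM hx0

end QuadBounds

lemma finrank_E : finrank ℝ (EuclideanSpace ℝ (Fin N)) = N := by
  simp [finrank_euclideanSpace]

lemma exists_ne_zero_mem_inf (W U : Submodule ℝ (EuclideanSpace ℝ (Fin N)))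
    (h : N < finrank ℝ W + finrank ℝ U) : ∃ x : EuclideanSpace ℝ (Fin N), x ∈ W ∧ x ∈ U ∧ x ≠ 0 := by
  have hsum := Submodule.finrank_sup_add_finrank_inf_eq W U
  have hle : finrank ℝ ↥(W ⊔ U) ≤ N :=
    le_trans (Submodule.finrank_le _) (le_of_eq finrank_E)
  have hpos : 0 < finrank ℝ ↥(W ⊓ U) := by omega
  obtain ⟨⟨x, hx⟩, hx0⟩ := Module.finrank_pos_iff_exists_ne_zero.mp hpos
  exact ⟨x, (Submodule.mem_inf.1 hx).1, (Submodule.mem_inf.1 hx).2, by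
    simpa [Submodule.mk_eq_zero] using hx0⟩

lemma card_filter_not {p : Fin N → Prop} [DecidablePred p] :
    (Finset.univ.filter fun k => ¬ p k).card = N - (Finset.univ.filter fun k => p k).card := by
  rw [Finset.filter_not, Finset.card_sdiff_of_subset (Finset.filter_subset _ _), Finset.card_univ,
    Fintype.card_fin]

lemma finrank_le_cLT (hM : M.IsHermitian) {t : ℝ} (W : Submodule ℝ (EuclideanSpace ℝ (Fin N)))
    (hW : ∀ x ∈ W, x ≠ 0 → (x : Fin N → ℝ) ⬝ᵥ (M *ᵥ x) < t * ((x : Fin N → ℝ) ⬝ᵥ x)) :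
    finrank ℝ W ≤ cLT hM t := by
  by_contra hcon
  push_neg at hcon
  set U := eigSpan hM (fun k => ¬ hM.eigenvalues k < t) with hU
  have hrU : finrank ℝ U = N - cLT hM t := by
    rw [hU, finrank_eigSpan, card_filter_not]; rfl
  have hcLT_le : cLT hM t ≤ N := by
    have : (Finset.univ.filter fun k => hM.eigenvalues k < t).card ≤ Finset.univ.card :=
      Finset.card_filter_le _ _
    simpa [cLT, Finset.card_univ] using this
  obtain ⟨x, hxW, hxU, hx0⟩ := exists_ne_zero_mem_inf W U (by omega)
  have h1 := hW x hxW hx0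
  have h2 := quad_ge_of_mem hM hxU
  linarith

lemma finrank_le_cLE (hM : M.IsHermitian) {t : ℝ} (W : Submodule ℝ (EuclideanSpace ℝ (Fin N)))
    (hW : ∀ x ∈ W, (x : Fin N → ℝ) ⬝ᵥ (M *ᵥ x) ≤ t * ((x : Fin N → ℝ) ⬝ᵥ x)) :
    finrank ℝ W ≤ cLE hM t := by
  by_contra hcon
  push_neg at hcon
  set U := eigSpan hM (fun k => ¬ hM.eigenvalues k ≤ t) with hU
  have hrU : finrank ℝ U = N - cLE hM t := by
    rw [hU, finrank_eigSpan, card_filter_not]; rfl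
  have hcLE_le : cLE hM t ≤ N := by
    have : (Finset.univ.filter fun k => hM.eigenvalues k ≤ t).card ≤ Finset.univ.card :=
      Finset.card_filter_le _ _
    simpa [cLE, Finset.card_univ] using this
  obtain ⟨x, hxW, hxU, hx0⟩ := exists_ne_zero_mem_inf W U (by omega)
  have h1 := hW x hxW
  have h2 := quad_gt_of_mem hM hxU hx0
  linarith

def toEuc (g : Fin N → ℝ) : EuclideanSpace ℝ (Fin N) := WithLp.toLp 2 g

lemma dot_of_orthog {g : Fin N → ℝ} {x : EuclideanSpace ℝ (Fin N)}
    (hx : x ∈ (ℝ ∙ (toEuc g))ᗮ) : g ⬝ᵥ (x : Fin N → ℝ) = 0 := by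
  rw [Submodule.mem_orthogonal_singleton_iff_inner_right] at hx
  rw [inner_eq_dot] at hx
  exact hx

lemma quad_rankone (g : Fin N → ℝ) (s : ℝ) (x : Fin N → ℝ) :
    x ⬝ᵥ ((s • vecMulVec g g) *ᵥ x) = s * ((g ⬝ᵥ x) * (x ⬝ᵥ g)) := by
  have h1 : (vecMulVec g g) *ᵥ x = (g ⬝ᵥ x) • g := by
    ext a
    simp only [mulVec, vecMulVec_apply, dotProduct, Pi.smul_apply, smul_eq_mul]
    rw [Finset.sum_mul]
    refine Finset.sum_congr rfl fun b _ => by ring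
  rw [smul_mulVec, h1]
  simp only [dotProduct_smul, smul_eq_mul]
  try ring

lemma finrank_inf_orthog (W : Submodule ℝ (EuclideanSpace ℝ (Fin N))) (g : Fin N → ℝ) :
    finrank ℝ W ≤ finrank ℝ ↥(W ⊓ (ℝ ∙ (toEuc g))ᗮ) + 1 := by
  set K := (ℝ ∙ (toEuc g))ᗮ with hK
  have h1 := Submodule.finrank_sup_add_finrank_inf_eq W K
  have h2 : finrank ℝ ↥(W ⊔ K) ≤ N := le_trans (Submodule.finrank_le _) (le_of_eq finrank_E)
  have h3 : finrank ℝ ↥(ℝ ∙ (toEuc g)) + finrank ℝ ↥K = N := by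
    rw [hK]
    rw [Submodule.finrank_add_finrank_orthogonal]
    exact finrank_E
  have h4 : finrank ℝ ↥(ℝ ∙ (toEuc g)) ≤ 1 := by
    by_cases hg : toEuc g = 0
    · rw [hg, Submodule.span_zero_singleton]; simp
    · rw [finrank_span_singleton hg]
  have h5 : finrank ℝ W ≤ N := le_trans (Submodule.finrank_le _) (le_of_eq finrank_E)
  omega

lemma cLT_le_bridge {M₁ M₂ : Matrix (Fin N) (Fin N) ℝ} (hM₁ : M₁.IsHermitian)
    (hM₂ : M₂.IsHermitian) (g : Fin N → ℝ) (s : ℝ)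
    (heq : M₂ = M₁ + s • vecMulVec g g) (t : ℝ) :
    cLT hM₁ t ≤ cLT hM₂ t + 1 := by
  set W := eigSpan hM₁ (fun k => hM₁.eigenvalues k < t) with hW
  set W' := W ⊓ (ℝ ∙ (toEuc g))ᗮ with hW'
  have hquad : ∀ x ∈ W', x ≠ 0 →
      (x : Fin N → ℝ) ⬝ᵥ (M₂ *ᵥ x) < t * ((x : Fin N → ℝ) ⬝ᵥ x) := by
    intro x hx hx0
    obtain ⟨hxW, hxK⟩ := Submodule.mem_inf.1 hx
    have hg0 : g ⬝ᵥ (x : Fin N → ℝ) = 0 := dot_of_orthog hxK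
    have : (x : Fin N → ℝ) ⬝ᵥ (M₂ *ᵥ x) = (x : Fin N → ℝ) ⬝ᵥ (M₁ *ᵥ x) := by
      rw [heq, add_mulVec, dotProduct_add, quad_rankone, hg0]
      ring
    rw [this]
    exact quad_lt_of_mem hM₁ hxW hx0
  calc cLT hM₁ t = finrank ℝ W := by rw [hW, finrank_eigSpan]; rfl
    _ ≤ finrank ℝ W' + 1 := finrank_inf_orthog W g
    _ ≤ cLT hM₂ t + 1 := by
        exact Nat.add_le_add_right (finrank_le_cLT hM₂ W' hquad) 1

lemma cLE_le_bridge {M₁ M₂ : Matrix (Fin N) (Fin N) ℝ} (hM₁ : M₁.IsHermitian)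
    (hM₂ : M₂.IsHermitian) (g : Fin N → ℝ) (s : ℝ)
    (heq : M₂ = M₁ + s • vecMulVec g g) (t : ℝ) :
    cLE hM₁ t ≤ cLE hM₂ t + 1 := by
  set W := eigSpan hM₁ (fun k => hM₁.eigenvalues k ≤ t) with hW
  set W' := W ⊓ (ℝ ∙ (toEuc g))ᗮ with hW'
  have hquad : ∀ x ∈ W',
      (x : Fin N → ℝ) ⬝ᵥ (M₂ *ᵥ x) ≤ t * ((x : Fin N → ℝ) ⬝ᵥ x) := by
    intro x hx
    obtain ⟨hxW, hxK⟩ := Submodule.mem_inf.1 hx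
    have hg0 : g ⬝ᵥ (x : Fin N → ℝ) = 0 := dot_of_orthog hxK
    have : (x : Fin N → ℝ) ⬝ᵥ (M₂ *ᵥ x) = (x : Fin N → ℝ) ⬝ᵥ (M₁ *ᵥ x) := by
      rw [heq, add_mulVec, dotProduct_add, quad_rankone, hg0]
      ring
    rw [this]
    exact quad_le_of_mem hM₁ hxW
  calc cLE hM₁ t = finrank ℝ W := by rw [hW, finrank_eigSpan]; rfl
    _ ≤ finrank ℝ W' + 1 := finrank_inf_orthog W g
    _ ≤ cLE hM₂ t + 1 := by
        exact Nat.add_le_add_right (finrank_le_cLE hM₂ W' hquad) 1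

lemma monotone_count_lt {ν : Fin N → ℝ} (hν : Monotone ν) (t : ℝ) (m : Fin N) :
    ν m < t ↔ (m : ℕ) < (Finset.univ.filter fun k => ν k < t).card := by
  constructor
  · intro h
    have hsub : Finset.Iic m ⊆ Finset.univ.filter fun k => ν k < t := by
      intro k hk
      simp only [Finset.mem_Iic] at hk
      simp only [Finset.mem_filter, Finset.mem_univ, true_and]
      exact lt_of_le_of_lt (hν hk) h
    have := Finset.card_le_card hsub
    rw [Fin.card_Iic] at this
    omega
  · intro h
    by_contra hc
    push_neg at hc
    have hsub : (Finset.univ.filter fun k => ν k < t) ⊆ Finset.Iio m := by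
      intro k hk
      simp only [Finset.mem_filter, Finset.mem_univ, true_and] at hk
      simp only [Finset.mem_Iio]
      by_contra hk2
      push_neg at hk2
      exact absurd (lt_of_le_of_lt (le_trans hc (hν hk2)) hk) (lt_irrefl _)
    have := Finset.card_le_card hsub
    rw [Fin.card_Iio] at this
    omega

lemma monotone_count_le {ν : Fin N → ℝ} (hν : Monotone ν) (t : ℝ) (m : Fin N) :
    ν m ≤ t ↔ (m : ℕ) < (Finset.univ.filter fun k => ν k ≤ t).card := by
  constructor
  · intro h
    have hsub : Finset.Iic m ⊆ Finset.univ.filter fun k => ν k ≤ t := by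
      intro k hk
      simp only [Finset.mem_Iic] at hk
      simp only [Finset.mem_filter, Finset.mem_univ, true_and]
      exact le_trans (hν hk) h
    have := Finset.card_le_card hsub
    rw [Fin.card_Iic] at this
    omega
  · intro h
    by_contra hc
    push_neg at hc
    have hsub : (Finset.univ.filter fun k => ν k ≤ t) ⊆ Finset.Iio m := by
      intro k hk
      simp only [Finset.mem_filter, Finset.mem_univ, true_and] at hk
      simp only [Finset.mem_Iio]
      by_contra hk2
      push_neg at hk2
      exact absurd (lt_of_lt_of_le hc (hν hk2)) (not_lt.2 hk)
    have := Finset.card_le_card hsub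
    rw [Fin.card_Iio] at this
    omega

lemma card_filter_comp_perm (σ : Equiv.Perm (Fin N)) (p : Fin N → Prop) [DecidablePred p] :
    (Finset.univ.filter fun k => p (σ k)).card = (Finset.univ.filter p).card := by
  refine Finset.card_bij (fun k _ => σ k) ?_ ?_ ?_
  · intro k hk
    simp only [Finset.mem_filter, Finset.mem_univ, true_and] at hk ⊢
    exact hk
  · intro a _ b _ h
    exact σ.injective h
  · intro y hy
    simp only [Finset.mem_filter, Finset.mem_univ, true_and] at hy
    exact ⟨σ.symm y, by simp [hy], by simp⟩

lemma sorted_lt_iff (hM : M.IsHermitian) (t : ℝ) (m : Fin N) :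
    sortedEigs hM m < t ↔ (m : ℕ) < cLT hM t := by
  have hmono : Monotone (sortedEigs hM) := Tuple.monotone_sort hM.eigenvalues
  rw [monotone_count_lt hmono t m]
  have : (Finset.univ.filter fun k => sortedEigs hM k < t).card = cLT hM t := by
    rw [cLT, ← card_filter_comp_perm (Tuple.sort hM.eigenvalues)
      (fun k => hM.eigenvalues k < t)]
    rfl
  rw [this]

lemma sorted_le_iff (hM : M.IsHermitian) (t : ℝ) (m : Fin N) :
    sortedEigs hM m ≤ t ↔ (m : ℕ) < cLE hM t := by
  have hmono : Monotone (sortedEigs hM) := Tuple.monotone_sort hM.eigenvalues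
  rw [monotone_count_le hmono t m]
  have : (Finset.univ.filter fun k => sortedEigs hM k ≤ t).card = cLE hM t := by
    rw [cLE, ← card_filter_comp_perm (Tuple.sort hM.eigenvalues)
      (fun k => hM.eigenvalues k ≤ t)]
    rfl
  rw [this]

lemma exists_sorted_of_eigenvalue (hM : M.IsHermitian) {μ : ℝ} (hex : ∃ k, hM.eigenvalues k = μ) :
    ∃ k, sortedEigs hM k = μ := by
  obtain ⟨k, hk⟩ := hex
  exact ⟨(Tuple.sort hM.eigenvalues)⁻¹ k, by simp [sortedEigs, hk]⟩

lemma cLE_le_N (hM : M.IsHermitian) (t : ℝ) : cLE hM t ≤ N := by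
  have : (Finset.univ.filter fun k => hM.eigenvalues k ≤ t).card ≤ Finset.univ.card :=
    Finset.card_filter_le _ _
  simpa [cLE, Finset.card_univ] using this

lemma exists_close_position {M₁ M₂ : Matrix (Fin N) (Fin N) ℝ} (hM₁ : M₁.IsHermitian)
    (hM₂ : M₂.IsHermitian) (g : Fin N → ℝ) (s : ℝ)
    (heq : M₂ = M₁ + s • vecMulVec g g) {μ : ℝ} (m : Fin N)
    (hm : sortedEigs hM₂ m = μ) (hex : ∃ k, hM₁.eigenvalues k = μ) :
    ∃ n : Fin N, sortedEigs hM₁ n = μ ∧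
      ((n : ℕ) + 1 = (m : ℕ) ∨ (n : ℕ) = (m : ℕ) ∨ (n : ℕ) = (m : ℕ) + 1) := by
  have heq' : M₁ = M₂ + (-s) • vecMulVec g g := by
    rw [heq, add_assoc, ← add_smul]
    simp
  have b1 := cLT_le_bridge hM₁ hM₂ g s heq μ
  have b2 := cLT_le_bridge hM₂ hM₁ g (-s) heq' μ
  have b3 := cLE_le_bridge hM₁ hM₂ g s heq μ
  have b4 := cLE_le_bridge hM₂ hM₁ g (-s) heq' μ
  have hmlt : ¬ ((m : ℕ) < cLT hM₂ μ) := by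
    rw [← sorted_lt_iff, hm]
    exact lt_irrefl μ
  have hmle : (m : ℕ) < cLE hM₂ μ := by
    rw [← sorted_le_iff, hm]
  obtain ⟨k', hk'⟩ := exists_sorted_of_eigenvalue hM₁ hex
  have hklt : ¬ ((k' : ℕ) < cLT hM₁ μ) := by
    rw [← sorted_lt_iff, hk']
    exact lt_irrefl μ
  have hkle : (k' : ℕ) < cLE hM₁ μ := by
    rw [← sorted_le_iff, hk']
  have hN := cLE_le_N hM₁ μ
  set n0 : ℕ := max (cLT hM₁ μ) ((m : ℕ) - 1) with hn0
  have h1 : cLT hM₁ μ ≤ n0 := le_max_left _ _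
  have h2 : (m : ℕ) - 1 ≤ n0 := le_max_right _ _
  have h3 : n0 = cLT hM₁ μ ∨ n0 = (m : ℕ) - 1 := max_choice _ _
  have hn0N : n0 < N := by omega
  have hval : ((⟨n0, hn0N⟩ : Fin N) : ℕ) = n0 := rfl
  refine ⟨⟨n0, hn0N⟩, ?_, by rw [hval]; omega⟩
  have hge : ¬ (sortedEigs hM₁ ⟨n0, hn0N⟩ < μ) := by
    rw [sorted_lt_iff, hval]
    omega
  have hle2 : sortedEigs hM₁ ⟨n0, hn0N⟩ ≤ μ := by
    rw [sorted_le_iff, hval]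
    omega
  exact le_antisymm hle2 (not_lt.1 hge)

def gvec {V : ℕ} (i j : Fin V) (α : ℝ) : Fin V → ℝ :=
  fun a => if a = i then α else if a = j then -1 else 0

lemma Bmat_eq_rankone {V : ℕ} {i j : Fin V} (hij : i ≠ j) {α : ℝ} (hα : α ≠ 0) :
    Bmat i j α = (-1/α) • vecMulVec (gvec i j α) (gvec i j α) := by
  ext a b
  simp only [Bmat, Matrix.of_apply, Matrix.smul_apply, vecMulVec_apply, gvec, smul_eq_mul]
  by_cases h1 : a = i <;> by_cases h2 : a = j <;> by_cases h3 : b = i <;> by_cases h4 : b = j <;>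
    simp [h1, h2, h3, h4, hij, Ne.symm hij] <;> field_simp <;> ring

lemma gvec_dot {V : ℕ} {i j : Fin V} (hij : i ≠ j) (α : ℝ) (f : Fin V → ℝ) :
    gvec i j α ⬝ᵥ f = α * f i - f j := by
  have h : ∀ a, gvec i j α a * f a
      = (if a = i then α * f a else 0) + (if a = j then -(f a) else 0) := by
    intro a
    by_cases h1 : a = i <;> by_cases h2 : a = j <;>
      simp [gvec, h1, h2] <;> simp_all <;> ring
  simp only [dotProduct, h, Finset.sum_add_distrib, Finset.sum_ite_eq' Finset.univ,
    Finset.mem_univ, if_true]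
  ring

lemma vecMulVec_mulVec' {N : ℕ} (g x : Fin N → ℝ) :
    (vecMulVec g g) *ᵥ x = (g ⬝ᵥ x) • g := by
  ext a
  simp only [mulVec, vecMulVec_apply, dotProduct, Pi.smul_apply, smul_eq_mul]
  rw [Finset.sum_mul]
  refine Finset.sum_congr rfl fun b _ => by ring

lemma Bmat_mulVec_eq_zero {V : ℕ} {i j : Fin V} (hij : i ≠ j) {α : ℝ} (hα : α ≠ 0)
    {f : Fin V → ℝ} (hfi : f i ≠ 0) (hαdef : α = f j / f i) :
    Bmat i j α *ᵥ f = 0 := by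
  rw [Bmat_eq_rankone hij hα, smul_mulVec, vecMulVec_mulVec', gvec_dot hij]
  have : α * f i - f j = 0 := by
    rw [hαdef, div_mul_cancel₀ _ hfi]
    ring
  rw [this]
  simp

end Aux

/-- (i) If for some `α ≠ 0` a normalized vector `f` with `f i ≠ 0` and
`α = f j / f i` is an eigenvector of `H(G';α) = H(G) + B(i,j;α)` for its `m`-th eigenvalue,
then `B(i,j;α) f = 0`, `f` is an eigenvector of `H(G)` with the same eigenvalue, and this
eigenvalue occupies a position `n ∈ {m-1, m, m+1}` in the spectrum of `H(G)`.
(ii) Conversely, a non-degenerate eigenvector `f⁽ⁿ⁾` of `H(G)` is, with `α⁺ = f j / f i`, an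
eigenvector of `H(G';α⁺)` with eigenvalue `λ_n(G)`, occupying a position `m` in the spectrum
of `H(G';α⁺)` with `n ∈ {m-1, m, m+1}`. (Positions are indexed from `0` here, so the `m`-th
eigenvalue of the paper is `sortedEigs _ m` with `(m : ℕ)` equal to paper-`m` minus one.) -/
theorem stmt_4 {V : ℕ} (G : SimpleGraph (Fin V)) (hG : G.Connected) (q : Fin V → ℝ)
    (i j : Fin V) (hij : G.Adj i j) :
    (∀ (α : ℝ), α ≠ 0 → ∀ (f : Fin V → ℝ) (m : Fin V),
      (∑ v, f v ^ 2 = 1) → f i ≠ 0 → α = f j / f i →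
      (Ham G q + Bmat i j α) *ᵥ f
          = sortedEigs ((Ham_isHermitian G q).add (Bmat_isHermitian i j α)) m • f →
      Bmat i j α *ᵥ f = 0 ∧
      Ham G q *ᵥ f = sortedEigs ((Ham_isHermitian G q).add (Bmat_isHermitian i j α)) m • f ∧
      ∃ n : Fin V,
        sortedEigs (Ham_isHermitian G q) n
            = sortedEigs ((Ham_isHermitian G q).add (Bmat_isHermitian i j α)) m ∧
        ((n : ℕ) + 1 = (m : ℕ) ∨ (n : ℕ) = (m : ℕ) ∨ (n : ℕ) = (m : ℕ) + 1)) ∧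
    (∀ (f : Fin V → ℝ) (n : Fin V),
      Ham G q *ᵥ f = sortedEigs (Ham_isHermitian G q) n • f →
      (∀ v, f v ≠ 0) →
      (∀ k : Fin V, sortedEigs (Ham_isHermitian G q) k = sortedEigs (Ham_isHermitian G q) n
        → k = n) →
      (Ham G q + Bmat i j (f j / f i)) *ᵥ f = sortedEigs (Ham_isHermitian G q) n • f ∧
      ∃ m : Fin V,
        sortedEigs ((Ham_isHermitian G q).add (Bmat_isHermitian i j (f j / f i))) m
            = sortedEigs (Ham_isHermitian G q) n ∧
        ((n : ℕ) + 1 = (m : ℕ) ∨ (n : ℕ) = (m : ℕ) ∨ (n : ℕ) = (m : ℕ) + 1)) := by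
  have hne : i ≠ j := hij.ne
  constructor
  · intro α hα f m hnorm hfi hαdef heig
    have hBf : Bmat i j α *ᵥ f = 0 := Bmat_mulVec_eq_zero hne hα hfi hαdef
    have hf0 : f ≠ 0 := fun h => hfi (by rw [h]; rfl)
    have hHf : Ham G q *ᵥ f
        = sortedEigs ((Ham_isHermitian G q).add (Bmat_isHermitian i j α)) m • f := by
      have h2 := heig
      rw [add_mulVec, hBf, add_zero] at h2
      exact h2
    refine ⟨hBf, hHf, ?_⟩
    have hex := exists_eigenvalue_of (Ham_isHermitian G q) hf0 hHf
    have heq : Ham G q + Bmat i j α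
        = Ham G q + (-1/α) • vecMulVec (gvec i j α) (gvec i j α) := by
      rw [Bmat_eq_rankone hne hα]
    obtain ⟨n, hn1, hn2⟩ := exists_close_position (Ham_isHermitian G q)
      ((Ham_isHermitian G q).add (Bmat_isHermitian i j α)) (gvec i j α) (-1/α) heq m rfl hex
    exact ⟨n, hn1, hn2⟩
  · intro f n heig hnz hsimp
    set α := f j / f i with hαdef
    have hα : α ≠ 0 := div_ne_zero (hnz j) (hnz i)
    have hBf : Bmat i j α *ᵥ f = 0 := Bmat_mulVec_eq_zero hne hα (hnz i) hαdef
    have hf0 : f ≠ 0 := fun h => (hnz i) (by rw [h]; rfl)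
    have hHBf : (Ham G q + Bmat i j α) *ᵥ f = sortedEigs (Ham_isHermitian G q) n • f := by
      rw [add_mulVec, hBf, add_zero, heig]
    refine ⟨hHBf, ?_⟩
    have hex := exists_eigenvalue_of ((Ham_isHermitian G q).add (Bmat_isHermitian i j α))
      hf0 hHBf
    have heq' : Ham G q = (Ham G q + Bmat i j α)
        + (-(-1/α)) • vecMulVec (gvec i j α) (gvec i j α) := by
      rw [Bmat_eq_rankone hne hα, add_assoc, ← add_smul]
      simp
    obtain ⟨m, hm1, hm2⟩ := exists_close_position
      ((Ham_isHermitian G q).add (Bmat_isHermitian i j α)) (Ham_isHermitian G q)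
      (gvec i j α) (-(-1/α)) heq' n rfl hex
    exact ⟨m, hm1, by omega⟩
end

section
/- Let P be a bipartite ν-partition of G whose number of removed edges equals ν − 1 (so the partition graph is a tree), and assume all eigenvalues of H(G) are simple. Then there is at most one vector γ of strictly negative parameters indexed by the removed edges such that (P,γ) is an equipartition. -/
open Matrix

/-- The lowest eigenvalue `λ₁(P_k;α)` of the block of the (Hermitian) matrix `M`
corresponding to the connected component `c` of the graph `H`, i.e. of the principal
submatrix of `M` indexed by the vertices of `c`. -/
noncomputable def lam1Block {V : ℕ} {M : Matrix (Fin V) (Fin V) ℝ} (hM : M.IsHermitian)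
    (H : SimpleGraph (Fin V)) (c : H.ConnectedComponent) : ℝ :=
  letI : Fintype {v : Fin V // H.connectedComponentMk v = c} := Fintype.ofFinite _
  letI : DecidableEq {v : Fin V // H.connectedComponentMk v = c} := Classical.decEq _
  ⨅ w : {v : Fin V // H.connectedComponentMk v = c},
    (hM.submatrix (Subtype.val : {v : Fin V // H.connectedComponentMk v = c} → Fin V)).eigenvalues w


set_option linter.unusedSectionVars false
open Matrix

variable {n : Type*} [Fintype n] [DecidableEq n]

lemma exists_orthoEigen {A : Matrix n n ℝ} (hA : A.IsHermitian) :
    ∃ w : n → n → ℝ,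
      (∀ i, A *ᵥ w i = hA.eigenvalues i • w i) ∧
      (∀ i j, w i ⬝ᵥ w j = if i = j then 1 else 0) ∧
      (∀ x : n → ℝ, ∑ i, (w i ⬝ᵥ x) • w i = x) := by
  classical
  set b := hA.eigenvectorBasis with hb
  refine ⟨fun i => ⇑(b i), fun i => hA.mulVec_eigenvectorBasis i, ?_, ?_⟩
  · intro i j
    have := (orthonormal_iff_ite (𝕜 := ℝ)).1 b.orthonormal i j
    rw [EuclideanSpace.inner_eq_star_dotProduct] at this
    simpa [dotProduct, WithLp.equiv, mul_comm] using this
  · intro x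
    have := b.sum_repr' (WithLp.toLp 2 x : EuclideanSpace ℝ n)
    have h2 : ∀ i, (inner (𝕜 := ℝ) (b i) (WithLp.toLp 2 x : EuclideanSpace ℝ n)) = (⇑(b i)) ⬝ᵥ x := by
      intro i
      rw [EuclideanSpace.inner_eq_star_dotProduct, dotProduct_comm]
      rfl
    calc ∑ i, ((⇑(b i)) ⬝ᵥ x) • ⇑(b i)
        = ∑ i, (inner (𝕜 := ℝ) (b i) (WithLp.toLp 2 x : EuclideanSpace ℝ n)) • ⇑(b i) := by
          simp_rw [h2]
      _ = x := by
          have := congrArg (fun (v : EuclideanSpace ℝ n) => (v : n → ℝ)) (b.sum_repr' (WithLp.toLp 2 x))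
          simpa using this

lemma sum_smul_dotProduct' (a : n → ℝ) (w : n → n → ℝ) (y : n → ℝ) :
    (∑ i, a i • w i) ⬝ᵥ y = ∑ i, a i * (w i ⬝ᵥ y) := by
  simp only [dotProduct, Finset.sum_apply, Pi.smul_apply, smul_eq_mul,
    Finset.sum_mul, Finset.mul_sum]
  rw [Finset.sum_comm]
  apply Finset.sum_congr rfl; intro i _; apply Finset.sum_congr rfl; intro v _; ring

lemma dotProduct_sum_smul' (a : n → ℝ) (w : n → n → ℝ) (y : n → ℝ) :
    y ⬝ᵥ (∑ i, a i • w i) = ∑ i, a i * (y ⬝ᵥ w i) := by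
  simp only [dotProduct, Finset.sum_apply, Pi.smul_apply, smul_eq_mul,
    Finset.sum_mul, Finset.mul_sum]
  rw [Finset.sum_comm]
  apply Finset.sum_congr rfl; intro i _; apply Finset.sum_congr rfl; intro v _; ring

lemma mulVec_sum_smul (A : Matrix n n ℝ) (a : n → ℝ) (w : n → n → ℝ) :
    A *ᵥ (∑ i, a i • w i) = ∑ i, a i • (A *ᵥ w i) := by
  rw [← Matrix.mulVecLin_apply, map_sum]
  simp [Matrix.mulVecLin_apply, Matrix.mulVec_smul]

lemma dotProduct_mulVec_symm {A : Matrix n n ℝ} (hA : A.IsHermitian) (x y : n → ℝ) :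
    x ⬝ᵥ (A *ᵥ y) = (A *ᵥ x) ⬝ᵥ y := by
  have hsym : ∀ a b, A a b = A b a := by
    intro a b
    have := congrFun (congrFun hA b) a
    simpa [Matrix.conjTranspose_apply] using this
  simp only [dotProduct, Matrix.mulVec, dotProduct, Finset.mul_sum,
    Finset.sum_mul]
  rw [Finset.sum_comm]
  apply Finset.sum_congr rfl; intro a _; apply Finset.sum_congr rfl; intro b _
  rw [hsym a b]; ring

section Nonempty
variable [Nonempty n] {A : Matrix n n ℝ} (hA : A.IsHermitian)

lemma iInf_le_eigenvalues (i : n) : (⨅ j, hA.eigenvalues j) ≤ hA.eigenvalues i :=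
  ciInf_le (Finite.bddBelow_range _) i

omit [Nonempty n] in
lemma coords_dot {w : n → n → ℝ}
    (hw3 : ∀ x : n → ℝ, ∑ i, (w i ⬝ᵥ x) • w i = x) (x : n → ℝ) :
    x ⬝ᵥ x = ∑ i, (w i ⬝ᵥ x) ^ 2 := by
  conv_lhs => rw [← hw3 x]
  rw [sum_smul_dotProduct']
  apply Finset.sum_congr rfl; intro i _; rw [hw3 x]; ring

omit [Nonempty n] in
lemma coords_quad {w : n → n → ℝ}
    (hw1 : ∀ i, A *ᵥ w i = hA.eigenvalues i • w i)
    (hw3 : ∀ x : n → ℝ, ∑ i, (w i ⬝ᵥ x) • w i = x) (x : n → ℝ) :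
    x ⬝ᵥ (A *ᵥ x) = ∑ i, hA.eigenvalues i * (w i ⬝ᵥ x) ^ 2 := by
  conv_lhs => rw [← hw3 x, mulVec_sum_smul]
  simp_rw [hw1]
  have : ∀ i : n, (w i ⬝ᵥ x) • hA.eigenvalues i • w i
      = (hA.eigenvalues i * (w i ⬝ᵥ x)) • w i := by
    intro i; rw [smul_smul]; ring_nf
  simp_rw [this]
  rw [dotProduct_sum_smul']
  apply Finset.sum_congr rfl; intro i _
  rw [hw3 x, dotProduct_comm x (w i)]
  ring

lemma rayleigh_min (x : n → ℝ) :
    (⨅ j, hA.eigenvalues j) * (x ⬝ᵥ x) ≤ x ⬝ᵥ (A *ᵥ x) := by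
  obtain ⟨w, hw1, hw2, hw3⟩ := exists_orthoEigen hA
  rw [coords_dot hw3, coords_quad hA hw1 hw3, Finset.mul_sum]
  apply Finset.sum_le_sum
  intro i _
  have := iInf_le_eigenvalues hA i
  nlinarith [sq_nonneg (w i ⬝ᵥ x)]

lemma rayleigh_eq {x : n → ℝ}
    (hx : x ⬝ᵥ (A *ᵥ x) = (⨅ j, hA.eigenvalues j) * (x ⬝ᵥ x)) :
    A *ᵥ x = (⨅ j, hA.eigenvalues j) • x := by
  obtain ⟨w, hw1, hw2, hw3⟩ := exists_orthoEigen hA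
  set μ := ⨅ j, hA.eigenvalues j with hμ
  have key : ∀ i, (hA.eigenvalues i - μ) * (w i ⬝ᵥ x) ^ 2 = 0 := by
    have hsum : ∑ i, (hA.eigenvalues i - μ) * (w i ⬝ᵥ x) ^ 2 = 0 := by
      have h1 := coords_dot hw3 x
      have h2 := coords_quad hA hw1 hw3 x
      simp only [sub_mul, Finset.sum_sub_distrib]
      rw [← h2, ← Finset.mul_sum, ← h1, hx]
      ring
    intro i
    have hnn : ∀ i ∈ Finset.univ, 0 ≤ (hA.eigenvalues i - μ) * (w i ⬝ᵥ x) ^ 2 := by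
      intro i _
      have := iInf_le_eigenvalues hA i
      nlinarith [sq_nonneg (w i ⬝ᵥ x)]
    exact (Finset.sum_eq_zero_iff_of_nonneg hnn).1 hsum i (Finset.mem_univ i)
  conv_lhs => rw [← hw3 x, mulVec_sum_smul]
  simp_rw [hw1]
  conv_rhs => rw [← hw3 x, Finset.smul_sum]
  apply Finset.sum_congr rfl
  intro i _
  have := key i
  rcases mul_eq_zero.1 this with h | h
  · have : hA.eigenvalues i = μ := by linarith
    rw [this, smul_comm]
  · have hz : w i ⬝ᵥ x = 0 := by
      have := sq_eq_zero_iff.1 h; exact this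
    rw [hz]; simp

lemma exists_min_eigenvector :
    ∃ φ : n → ℝ, φ ⬝ᵥ φ = 1 ∧ A *ᵥ φ = (⨅ j, hA.eigenvalues j) • φ := by
  obtain ⟨w, hw1, hw2, hw3⟩ := exists_orthoEigen hA
  obtain ⟨i, hi⟩ := Finite.exists_min hA.eigenvalues
  have hieq : hA.eigenvalues i = ⨅ j, hA.eigenvalues j :=
    le_antisymm (le_ciInf hi) (iInf_le_eigenvalues hA i)
  refine ⟨w i, by simpa using hw2 i i, ?_⟩
  rw [hw1 i, hieq]

omit [Nonempty n] in
lemma eigenspace_one_dim (hinj : Function.Injective hA.eigenvalues)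
    {t : ℝ} {x y : n → ℝ} (hx : A *ᵥ x = t • x) (hy : A *ᵥ y = t • y)
    (hx0 : x ≠ 0) : ∃ c : ℝ, y = c • x := by
  obtain ⟨w, hw1, hw2, hw3⟩ := exists_orthoEigen hA
  have key : ∀ z : n → ℝ, A *ᵥ z = t • z → ∀ i, hA.eigenvalues i ≠ t → w i ⬝ᵥ z = 0 := by
    intro z hz i hne
    have h1 : w i ⬝ᵥ (A *ᵥ z) = t * (w i ⬝ᵥ z) := by
      rw [hz, dotProduct_smul]; simp
    have h2 : w i ⬝ᵥ (A *ᵥ z) = hA.eigenvalues i * (w i ⬝ᵥ z) := by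
      rw [dotProduct_mulVec_symm hA, hw1, smul_dotProduct]; simp
    have : (hA.eigenvalues i - t) * (w i ⬝ᵥ z) = 0 := by
      rw [sub_mul, ← h2, h1]; ring
    rcases mul_eq_zero.1 this with h | h
    · exact absurd (by linarith) hne
    · exact h
  obtain ⟨i0, hi0⟩ : ∃ i0, w i0 ⬝ᵥ x ≠ 0 := by
    by_contra hall
    push_neg at hall
    apply hx0
    rw [← hw3 x]
    apply Finset.sum_eq_zero
    intro i _
    rw [hall i]; simp
  have hteq : hA.eigenvalues i0 = t := by
    by_contra hne
    exact hi0 (key x hx i0 hne)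
  have hxe : x = (w i0 ⬝ᵥ x) • w i0 := by
    conv_lhs => rw [← hw3 x]
    rw [Finset.sum_eq_single i0]
    · intro i _ hne
      have : hA.eigenvalues i ≠ t := fun h => hne (hinj (h.trans hteq.symm))
      rw [key x hx i this]; simp
    · intro h; exact absurd (Finset.mem_univ i0) h
  have hye : y = (w i0 ⬝ᵥ y) • w i0 := by
    conv_lhs => rw [← hw3 y]
    rw [Finset.sum_eq_single i0]
    · intro i _ hne
      have : hA.eigenvalues i ≠ t := fun h => hne (hinj (h.trans hteq.symm))
      rw [key y hy i this]; simp
    · intro h; exact absurd (Finset.mem_univ i0) h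
  refine ⟨(w i0 ⬝ᵥ y) / (w i0 ⬝ᵥ x), ?_⟩
  rw [hye, hxe, smul_smul]
  congr 1
  have hnorm : w i0 ⬝ᵥ w i0 = 1 := by simpa using hw2 i0 i0
  simp only [dotProduct_smul, smul_eq_mul, hnorm, mul_one]
  field_simp

end Nonempty

section Perron
variable [Nonempty n] {A : Matrix n n ℝ} (hA : A.IsHermitian)

lemma perron_positive
    (hoff : ∀ a b : n, a ≠ b → A a b ≤ 0)
    (hconn : ∀ Z : Set n, Z.Nonempty →
      (∀ a b : n, a ∈ Z → a ≠ b → A a b ≠ 0 → b ∈ Z) → ∀ v, v ∈ Z) :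
    ∃ φ : n → ℝ, (∀ v, 0 < φ v) ∧ A *ᵥ φ = (⨅ j, hA.eigenvalues j) • φ := by
  classical
  obtain ⟨x, hx1, hx2⟩ := exists_min_eigenvector hA
  set μ := ⨅ j, hA.eigenvalues j with hμ
  set y : n → ℝ := fun v => |x v| with hy
  have hyy : y ⬝ᵥ y = x ⬝ᵥ x := by
    simp [dotProduct, hy, abs_mul_abs_self]
  have hquad : y ⬝ᵥ (A *ᵥ y) ≤ x ⬝ᵥ (A *ᵥ x) := by
    simp only [dotProduct, Matrix.mulVec, Finset.mul_sum]
    apply Finset.sum_le_sum; intro a _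
    apply Finset.sum_le_sum; intro b _
    by_cases hab : a = b
    · subst hab; simp only [hy]
      have : |x a| * (A a a * |x a|) = x a * (A a a * x a) := by
        rw [mul_comm (A a a)]; rw [mul_comm (A a a)]
        rw [← mul_assoc, ← mul_assoc, abs_mul_abs_self]
      exact le_of_eq this
    · have h1 : A a b ≤ 0 := hoff a b hab
      have h2 : x a * x b ≤ |x a| * |x b| := by
        calc x a * x b ≤ |x a * x b| := le_abs_self _
        _ = |x a| * |x b| := abs_mul _ _
      have : A a b * (|x a| * |x b|) ≤ A a b * (x a * x b) :=
        mul_le_mul_of_nonpos_left h2 h1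
      calc y a * (A a b * y b) = A a b * (|x a| * |x b|) := by simp only [hy]; ring
      _ ≤ A a b * (x a * x b) := this
      _ = x a * (A a b * x b) := by ring
  have hxAx : x ⬝ᵥ (A *ᵥ x) = μ * (x ⬝ᵥ x) := by
    rw [hx2, dotProduct_smul]; simp
  have heq : y ⬝ᵥ (A *ᵥ y) = μ * (y ⬝ᵥ y) := by
    have hlow := rayleigh_min hA y
    rw [← hμ, hyy] at hlow
    rw [hyy]
    linarith
  have hAy : A *ᵥ y = μ • y := rayleigh_eq hA heq
  have hZ : ∀ v, v ∈ {v : n | y v ≠ 0} := by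
    apply hconn
    · obtain ⟨v, hv⟩ : ∃ v, x v ≠ 0 := by
        by_contra hall
        push_neg at hall
        have : x ⬝ᵥ x = 0 := by
          simp only [dotProduct]
          apply Finset.sum_eq_zero
          intro v _
          rw [hall v]; ring
        rw [this] at hx1; norm_num at hx1
      exact ⟨v, by simp [hy, hv]⟩
    · intro a b ha hab hAab
      simp only [Set.mem_setOf_eq, hy] at ha ⊢
      intro hyb0
      have hrow : (A *ᵥ y) b = 0 := by
        rw [hAy]; simp only [Pi.smul_apply, smul_eq_mul, hy]
        rw [abs_eq_zero.2 ?_]; · ring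
        · exact abs_eq_zero.1 (by simpa [hy] using hyb0)
      have hterms : ∀ t ∈ Finset.univ, A b t * y t ≤ 0 := by
        intro t _
        by_cases htb : t = b
        · subst htb
          rw [show y t = 0 from by simpa [hy] using hyb0]; simp
        · exact mul_nonpos_of_nonpos_of_nonneg (hoff b t (Ne.symm htb)) (abs_nonneg _)
      have hsum0 : ∑ t, A b t * y t = 0 := by
        simpa [Matrix.mulVec, dotProduct] using hrow
      have hterm : A b a * y a = 0 := by
        have := (Finset.sum_eq_zero_iff_of_nonpos hterms).1 hsum0 a (Finset.mem_univ a)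
        exact this
      have hAba : A b a ≠ 0 := by
        have hsym : A b a = A a b := by
          have := congrFun (congrFun hA a) b
          simpa [Matrix.conjTranspose_apply] using this
        rw [hsym]; exact hAab
      have : y a = 0 := by
        rcases mul_eq_zero.1 hterm with h | h
        · exact absurd h hAba
        · exact h
      exact ha (by simpa [hy] using this)
  refine ⟨y, ?_, hAy⟩
  intro v
  have := hZ v
  simp only [Set.mem_setOf_eq] at this
  have : y v ≠ 0 := this
  have hnn : 0 ≤ y v := abs_nonneg _
  exact lt_of_le_of_ne hnn (Ne.symm this)

end Perron

-- Helper lemmas about Bmat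
lemma Bmat_offdiag {V : ℕ} (i j : Fin V) (α : ℝ) (a b : Fin V) (hab : a ≠ b) :
    Bmat i j α a b = if (a = i ∧ b = j) ∨ (a = j ∧ b = i) then 1 else 0 := by
  unfold Bmat
  rw [Matrix.of_apply]
  rw [if_neg (by rintro ⟨h1, h2⟩; exact hab (h1.trans h2.symm))]
  rw [if_neg (by rintro ⟨h1, h2⟩; exact hab (h1.trans h2.symm))]
  ring

lemma Bmat_mulVec_zero {V : ℕ} (i j : Fin V) (hij : i ≠ j) (α : ℝ) (hα : α ≠ 0)
    (ψ : Fin V → ℝ) (hc : ψ j = α * ψ i) :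
    Bmat i j α *ᵥ ψ = 0 := by
  funext a
  simp only [Matrix.mulVec, dotProduct, Bmat, Matrix.of_apply, Pi.zero_apply]
  simp only [add_mul, Finset.sum_add_distrib, ite_mul, zero_mul]
  by_cases hai : a = i
  · have haj : a ≠ j := by rw [hai]; exact hij
    rw [Finset.sum_eq_single i (by intro b _ hb; rw [if_neg (by rintro ⟨_, h2⟩; exact hb h2)])
      (by intro h; exact absurd (Finset.mem_univ i) h)]
    rw [Finset.sum_eq_zero (by intro b _; rw [if_neg (by rintro ⟨h1, _⟩; exact haj h1)])]
    rw [Finset.sum_eq_single j (by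
        intro b _ hb
        rw [if_neg (by rintro (⟨_, h2⟩ | ⟨h1, _⟩); exacts [hb h2, haj h1])])
      (by intro h; exact absurd (Finset.mem_univ j) h)]
    rw [if_pos ⟨hai, rfl⟩, if_pos (Or.inl ⟨hai, rfl⟩), hc]
    ring
  · by_cases haj : a = j
    · rw [Finset.sum_eq_zero (by intro b _; rw [if_neg (by rintro ⟨h1, _⟩; exact hai h1)])]
      rw [Finset.sum_eq_single j (by intro b _ hb; rw [if_neg (by rintro ⟨_, h2⟩; exact hb h2)])
        (by intro h; exact absurd (Finset.mem_univ j) h)]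
      rw [Finset.sum_eq_single i (by
          intro b _ hb
          rw [if_neg (by rintro (⟨h1, _⟩ | ⟨_, h2⟩); exacts [hai h1, hb h2])])
        (by intro h; exact absurd (Finset.mem_univ i) h)]
      rw [if_pos ⟨haj, rfl⟩, if_pos (Or.inr ⟨haj, rfl⟩), hc]
      field_simp
      ring
    · rw [Finset.sum_eq_zero (by intro b _; rw [if_neg (by rintro ⟨h1, _⟩; exact hai h1)])]
      rw [Finset.sum_eq_zero (by intro b _; rw [if_neg (by rintro ⟨h1, _⟩; exact haj h1)])]
      rw [Finset.sum_eq_zero (by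
        intro b _
        rw [if_neg (by rintro (⟨h1, _⟩ | ⟨h1, _⟩); exacts [hai h1, haj h1])])]
      ring

lemma sum_mulVec' {V : ℕ} {ι : Type*} (s : Finset ι) (A : ι → Matrix (Fin V) (Fin V) ℝ)
    (v : Fin V → ℝ) : (∑ i ∈ s, A i) *ᵥ v = ∑ i ∈ s, A i *ᵥ v := by
  funext a
  simp only [Matrix.mulVec, dotProduct, Matrix.sum_apply, Finset.sum_apply,
    Finset.sum_mul]
  rw [Finset.sum_comm]

/-- Let `P` be a bipartite `ν`-partition of `G` whose number of removed
edges is `ν - 1` (a tree partition), and assume all eigenvalues of `H(G)` are simple. Then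
there is at most one vector `γ` of strictly negative parameters on the removed edges for
which `(P,γ)` is an equipartition. -/
theorem stmt_16 {V : ℕ} (G : SimpleGraph (Fin V)) (hG : G.Connected) (q : Fin V → ℝ)
    (S : Finset (Fin V × Fin V))
    (hSadj : ∀ p ∈ S, G.Adj p.1 p.2) (hSlt : ∀ p ∈ S, p.1 < p.2)
    (P : SimpleGraph (Fin V)) (hPdef : P = G.deleteEdges ↑(S.image fun p => s(p.1, p.2)))
    (hpart : ∀ p ∈ S, ¬ P.Reachable p.1 p.2)
    (hbip : ∃ σ : P.ConnectedComponent → Bool,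
      ∀ p ∈ S, σ (P.connectedComponentMk p.1) ≠ σ (P.connectedComponentMk p.2))
    (htree : S.card + 1 = Nat.card P.ConnectedComponent)
    (hGsimple : Function.Injective (sortedEigs (Ham_isHermitian G q)))
    (γ γ' : Fin V × Fin V → ℝ) (hγ : ∀ p ∈ S, γ p < 0) (hγ' : ∀ p ∈ S, γ' p < 0)
    (HP HP' : Matrix (Fin V) (Fin V) ℝ)
    (hHPdef : HP = Ham G q + ∑ p ∈ S, Bmat p.1 p.2 (γ p)) (hHP : HP.IsHermitian)
    (hHPdef' : HP' = Ham G q + ∑ p ∈ S, Bmat p.1 p.2 (γ' p)) (hHP' : HP'.IsHermitian)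
    (hEq : ∃ lam : ℝ, ∀ c : P.ConnectedComponent, lam1Block hHP P c = lam)
    (hEq' : ∃ lam : ℝ, ∀ c : P.ConnectedComponent, lam1Block hHP' P c = lam) :
    ∀ p ∈ S, γ p = γ' p := by
  classical
  have hVne : Nonempty (Fin V) := hG.nonempty
  set K : Fin V → P.ConnectedComponent := P.connectedComponentMk with hKdef
  -- basic structural lemmas
  have hPadjG : ∀ a b : Fin V, P.Adj a b → G.Adj a b := by
    intro a b hab
    rw [hPdef, SimpleGraph.deleteEdges_adj] at hab
    exact hab.1
  have hPadjK : ∀ a b : Fin V, P.Adj a b → K a = K b :=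
    fun a b h => SimpleGraph.ConnectedComponent.sound h.reachable
  have hKS : ∀ r ∈ S, K r.1 ≠ K r.2 := by
    intro r hr h
    exact hpart r hr (SimpleGraph.ConnectedComponent.exact h)
  have hedge : ∀ a b : Fin V, G.Adj a b → ¬ P.Adj a b →
      ∃ r ∈ S, (r.1 = a ∧ r.2 = b) ∨ (r.1 = b ∧ r.2 = a) := by
    intro a b hab hnP
    rw [hPdef, SimpleGraph.deleteEdges_adj] at hnP
    push_neg at hnP
    have hmem := hnP hab
    simp only [Finset.coe_image, Set.mem_image, Finset.mem_coe] at hmem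
    obtain ⟨r, hrS, hr⟩ := hmem
    rw [Sym2.eq_iff] at hr
    exact ⟨r, hrS, hr⟩
  have hsameAdj : ∀ a b : Fin V, K a = K b → G.Adj a b → P.Adj a b := by
    intro a b hk hadj
    by_contra h
    obtain ⟨r, hrS, hr⟩ := hedge a b hadj h
    apply hKS r hrS
    rcases hr with ⟨h1, h2⟩ | ⟨h1, h2⟩ <;> rw [h1, h2]
    · exact hk
    · exact hk.symm
  have huniq : ∀ (a b : Fin V), ∀ r ∈ S, ∀ r' ∈ S,
      ((r.1 = a ∧ r.2 = b) ∨ (r.1 = b ∧ r.2 = a)) →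
      ((r'.1 = a ∧ r'.2 = b) ∨ (r'.1 = b ∧ r'.2 = a)) → r = r' := by
    intro a b r hr r' hr' h1 h2
    rcases h1 with ⟨h11, h12⟩ | ⟨h11, h12⟩ <;> rcases h2 with ⟨h21, h22⟩ | ⟨h21, h22⟩
    · exact Prod.ext (h11.trans h21.symm) (h12.trans h22.symm)
    · exfalso
      have l1 := hSlt r hr
      have l2 := hSlt r' hr'
      rw [h11, h12] at l1; rw [h21, h22] at l2
      exact absurd l2 (asymm l1)
    · exfalso
      have l1 := hSlt r hr
      have l2 := hSlt r' hr'
      rw [h11, h12] at l1; rw [h21, h22] at l2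
      exact absurd l2 (asymm l1)
    · exact Prod.ext (h11.trans h21.symm) (h12.trans h22.symm)
  -- entries of the perturbed Hamiltonians off the diagonal
  have entry : ∀ (γ0 : Fin V × Fin V → ℝ) (M : Matrix (Fin V) (Fin V) ℝ),
      M = Ham G q + ∑ r ∈ S, Bmat r.1 r.2 (γ0 r) → ∀ a b : Fin V, a ≠ b →
      (K a ≠ K b → M a b = 0) ∧ (K a = K b → M a b = if G.Adj a b then -1 else 0) := by
    intro γ0 M hMdef a b hab
    have hM : M a b = (if G.Adj a b then (-1:ℝ) else 0)
        + ∑ r ∈ S, (if (a = r.1 ∧ b = r.2) ∨ (a = r.2 ∧ b = r.1) then (1:ℝ) else 0) := by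
      rw [hMdef]
      rw [Matrix.add_apply, Matrix.sum_apply]
      congr 1
      · unfold Ham
        rw [Matrix.of_apply, if_neg hab]
      · apply Finset.sum_congr rfl
        intro r _
        exact Bmat_offdiag r.1 r.2 (γ0 r) a b hab
    constructor
    · intro hKab
      by_cases hadj : G.Adj a b
      · obtain ⟨r0, hr0S, hr0⟩ := hedge a b hadj (fun h => hKab (hPadjK a b h))
        rw [hM, if_pos hadj]
        rw [Finset.sum_eq_single r0 (by
            intro r hr hne
            rw [if_neg (by
              intro hcond
              apply hne
              apply huniq a b r hr r0 hr0S ?_ ?_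
              · rcases hcond with ⟨h1, h2⟩ | ⟨h1, h2⟩
                · exact Or.inl ⟨h1.symm, h2.symm⟩
                · exact Or.inr ⟨h2.symm, h1.symm⟩
              · exact hr0)])
          (fun h => absurd hr0S h)]
        rw [if_pos (by
          rcases hr0 with ⟨h1, h2⟩ | ⟨h1, h2⟩
          · exact Or.inl ⟨h1.symm, h2.symm⟩
          · exact Or.inr ⟨h2.symm, h1.symm⟩)]
        ring
      · rw [hM, if_neg hadj]
        rw [Finset.sum_eq_zero (by
          intro r hr
          rw [if_neg (by
            intro hcond
            apply hadj
            have := hSadj r hr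
            rcases hcond with ⟨h1, h2⟩ | ⟨h1, h2⟩
            · rw [h1, h2]; exact this
            · rw [h1, h2]; exact this.symm)])]
        ring
    · intro hKab
      rw [hM]
      rw [Finset.sum_eq_zero (by
        intro r hr
        rw [if_neg (by
          intro hcond
          apply hKS r hr
          rcases hcond with ⟨h1, h2⟩ | ⟨h1, h2⟩
          · rw [← h1, ← h2]; exact hKab
          · rw [← h1, ← h2]; exact hKab.symm)])]
      ring
  
  obtain ⟨Λ, hΛ⟩ := hEq
  obtain ⟨Λ', hΛ'⟩ := hEq'
  have key : ∀ (M : Matrix (Fin V) (Fin V) ℝ) (hM : M.IsHermitian) (L : ℝ),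
      (∀ a b : Fin V, a ≠ b →
        (K a ≠ K b → M a b = 0) ∧ (K a = K b → M a b = if G.Adj a b then -1 else 0)) →
      (∀ c, lam1Block hM P c = L) →
      ∀ c : P.ConnectedComponent, ∃ u : {v : Fin V // K v = c} → ℝ,
        (∀ w, 0 < u w) ∧
        (letI : Fintype {v : Fin V // K v = c} := Fintype.ofFinite _
         M.submatrix Subtype.val Subtype.val *ᵥ u = L • u) := by
    intro M hM L hentry hL c
    letI instF : Fintype {v : Fin V // K v = c} := Fintype.ofFinite _
    letI instD : DecidableEq {v : Fin V // K v = c} := Classical.decEq _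
    haveI : Nonempty {v : Fin V // K v = c} := by
      obtain ⟨v, hv⟩ := c.exists_rep
      exact ⟨⟨v, hv⟩⟩
    have hherm : (M.submatrix (Subtype.val : {v : Fin V // K v = c} → Fin V)
        Subtype.val).IsHermitian := hM.submatrix _
    have hoff : ∀ a b : {v : Fin V // K v = c}, a ≠ b →
        M.submatrix Subtype.val Subtype.val a b ≤ 0 := by
      intro a b hab
      have hne : (a : Fin V) ≠ (b : Fin V) := fun h => hab (Subtype.ext h)
      rw [Matrix.submatrix_apply]
      rw [(hentry a.val b.val hne).2 (a.2.trans b.2.symm)]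
      split <;> norm_num
    have hconn : ∀ Z : Set {v : Fin V // K v = c}, Z.Nonempty →
        (∀ a b, a ∈ Z → a ≠ b → M.submatrix Subtype.val Subtype.val a b ≠ 0 → b ∈ Z) →
        ∀ v, v ∈ Z := by
      intro Z hZne hcl v
      obtain ⟨z, hz⟩ := hZne
      have hreach : P.Reachable z.val v.val :=
        SimpleGraph.ConnectedComponent.exact (z.2.trans v.2.symm)
      obtain ⟨w⟩ := hreach
      have main : ∀ (x y : Fin V), P.Walk x y → ∀ (hx : K x = c) (hy : K y = c),
          (⟨x, hx⟩ : {v : Fin V // K v = c}) ∈ Z → ⟨y, hy⟩ ∈ Z := by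
        intro x y w
        induction w with
        | nil => intro hx hy h; exact h
        | @cons x m y hadj p ih =>
          intro hx hy h
          have hm : K m = c := by rw [← hx]; exact (hPadjK x m hadj).symm
          apply ih hm hy
          apply hcl ⟨x, hx⟩ ⟨m, hm⟩ h
          · intro heq
            exact hadj.ne (congrArg Subtype.val heq)
          · rw [Matrix.submatrix_apply, (hentry x m hadj.ne).2 (hPadjK x m hadj),
              if_pos (hPadjG x m hadj)]
            norm_num
      exact main z.val v.val w z.2 v.2 hz
    obtain ⟨φ, hφpos, hφeig⟩ := perron_positive hherm hoff hconn
    refine ⟨φ, hφpos, ?_⟩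
    have hμ : (⨅ j, hherm.eigenvalues j) = L := by
      rw [← hL c]
      rfl
    rw [hφeig, hμ]
  
  have mkPsi : ∀ (M : Matrix (Fin V) (Fin V) ℝ) (L : ℝ)
      (u : ∀ c : P.ConnectedComponent, {v : Fin V // K v = c} → ℝ),
      (∀ a b : Fin V, a ≠ b → K a ≠ K b → M a b = 0) →
      (∀ c, (letI : Fintype {v : Fin V // K v = c} := Fintype.ofFinite _
         M.submatrix Subtype.val Subtype.val *ᵥ u c = L • u c)) →
      ∀ d : P.ConnectedComponent → ℝ,
        M *ᵥ (fun v => d (K v) * u (K v) ⟨v, rfl⟩)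
          = L • (fun v => d (K v) * u (K v) ⟨v, rfl⟩) := by
    intro M L u hcross hueig d
    have hu_eq : ∀ (c1 c2 : P.ConnectedComponent) (hc : c1 = c2) (b : Fin V)
        (h1 : K b = c1) (h2 : K b = c2), u c1 ⟨b, h1⟩ = u c2 ⟨b, h2⟩ := by
      intro c1 c2 hc b h1 h2; subst hc; rfl
    funext v
    letI instF : Fintype {x : Fin V // K x = K v} := Fintype.ofFinite _
    have hsub : M.submatrix Subtype.val Subtype.val *ᵥ u (K v) = L • u (K v) := hueig (K v)
    show (∑ b, M v b * (d (K b) * u (K b) ⟨b, rfl⟩)) = L * (d (K v) * u (K v) ⟨v, rfl⟩)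
    have hfil : ∀ b ∈ Finset.univ, (M v b * (d (K b) * u (K b) ⟨b, rfl⟩) ≠ 0) → K b = K v := by
      intro b _ hnz
      by_contra hKb
      have hvb : v ≠ b := fun h => hKb (by rw [h])
      exact hnz (by rw [hcross v b hvb (fun hh => hKb hh.symm)]; ring)
    rw [← Finset.sum_filter_of_ne hfil]
    rw [Finset.sum_subtype (p := fun b => K b = K v) _ (by intro x; simp)]
    have hterm : ∀ b : {x : Fin V // K x = K v},
        M v b.val * (d (K b.val) * u (K b.val) ⟨b.val, rfl⟩)
        = d (K v) * (M.submatrix Subtype.val Subtype.val ⟨v, rfl⟩ b * u (K v) b) := by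
      intro b
      have hd : d (K b.val) = d (K v) := by rw [b.2]
      have hu : u (K b.val) ⟨b.val, rfl⟩ = u (K v) b := hu_eq (K b.val) (K v) b.2 b.val rfl b.2
      rw [Matrix.submatrix_apply, hd, hu]
      ring
    rw [Finset.sum_congr rfl (fun b _ => hterm b), ← Finset.mul_sum]
    have hmv : (∑ b : {x : Fin V // K x = K v},
        M.submatrix Subtype.val Subtype.val ⟨v, rfl⟩ b * u (K v) b)
        = (M.submatrix Subtype.val Subtype.val *ᵥ u (K v)) ⟨v, rfl⟩ := rfl
    have h2 : (M.submatrix Subtype.val Subtype.val *ᵥ u (K v)) ⟨v, rfl⟩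
        = L * u (K v) ⟨v, rfl⟩ := by
      have := congrFun hsub ⟨v, rfl⟩
      exact this
    rw [hmv, h2]
    ring
  
  -- existence of a nonzero coefficient vector satisfying the edge constraints
  have coef : ∀ (γ0 : Fin V × Fin V → ℝ) (φf : Fin V → ℝ),
      ∃ d : P.ConnectedComponent → ℝ, d ≠ 0 ∧
        ∀ p ∈ S, d (K p.2) * φf p.2 = γ0 p * (d (K p.1) * φf p.1) := by
    intro γ0 φf
    letI instK : Fintype P.ConnectedComponent := Fintype.ofFinite _
    haveI : Nonempty P.ConnectedComponent := ⟨K (Classical.arbitrary _)⟩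
    let T : (P.ConnectedComponent → ℝ) →ₗ[ℝ] ({p : Fin V × Fin V // p ∈ S} → ℝ) :=
    { toFun := fun d p => d (K p.1.2) * φf p.1.2 - γ0 p.1 * (d (K p.1.1) * φf p.1.1),
      map_add' := by intro d e; funext p; simp only [Pi.add_apply]; ring,
      map_smul' := by
        intro r d; funext p
        simp only [Pi.smul_apply, smul_eq_mul, RingHom.id_apply]; ring }
    have hnotinj : ¬ Function.Injective T := by
      intro hinj
      have h1 := LinearMap.finrank_le_finrank_of_injective hinj
      rw [Module.finrank_pi, Module.finrank_pi, Fintype.card_coe] at h1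
      have h2 : Nat.card P.ConnectedComponent = Fintype.card P.ConnectedComponent :=
        Nat.card_eq_fintype_card
      omega
    obtain ⟨d1, d2, hTeq, hne⟩ : ∃ a b, T a = T b ∧ a ≠ b := by
      by_contra hno
      push_neg at hno
      exact hnotinj fun a b h => hno a b h
    refine ⟨d1 - d2, sub_ne_zero.2 hne, ?_⟩
    intro p hp
    have hT0 : T (d1 - d2) = 0 := by rw [map_sub, hTeq, sub_self]
    have h3 : (d1 - d2) (K p.2) * φf p.2 - γ0 p * ((d1 - d2) (K p.1) * φf p.1) = 0 :=
      congrFun hT0 ⟨p, hp⟩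
    linarith
  -- propagation of predicates along the partition structure
  have prop : ∀ (Q : Fin V → Prop), (∀ a b : Fin V, K a = K b → Q a → Q b) →
      (∀ p ∈ S, (Q p.1 ↔ Q p.2)) → ∀ a : Fin V, Q a → ∀ b : Fin V, Q b := by
    intro Q hQK hQS a ha b
    obtain ⟨w⟩ := hG.preconnected a b
    have main : ∀ (x y : Fin V), G.Walk x y → Q x → Q y := by
      intro x y w
      induction w with
      | nil => exact id
      | @cons x m y hadj p ih =>
        intro hx
        apply ih
        by_cases hk : K x = K m
        · exact hQK x m hk hx
        · obtain ⟨r, hrS, hr⟩ := hedge x m hadj (fun h => hk (hPadjK x m h))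
          rcases hr with ⟨h1, h2⟩ | ⟨h1, h2⟩
          · have := (hQS r hrS).1 (by rw [h1]; exact hx)
            rw [← h2]; exact this
          · have := (hQS r hrS).2 (by rw [h2]; exact hx)
            rw [← h1]; exact this
    exact main a b w ha
  -- nonvanishing of coefficient vectors
  have nonvanish : ∀ (γ0 : Fin V × Fin V → ℝ), (∀ p ∈ S, γ0 p < 0) →
      ∀ (φf : Fin V → ℝ), (∀ v, 0 < φf v) →
      ∀ (d : P.ConnectedComponent → ℝ), d ≠ 0 →
      (∀ p ∈ S, d (K p.2) * φf p.2 = γ0 p * (d (K p.1) * φf p.1)) →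
      ∀ v : Fin V, d (K v) ≠ 0 := by
    intro γ0 hγ0 φf hφf d hd hcons
    have hQS : ∀ p ∈ S, (d (K p.1) ≠ 0 ↔ d (K p.2) ≠ 0) := by
      intro p hp
      have hE := hcons p hp
      have hγne : γ0 p ≠ 0 := ne_of_lt (hγ0 p hp)
      have hf1 : φf p.1 ≠ 0 := ne_of_gt (hφf p.1)
      have hf2 : φf p.2 ≠ 0 := ne_of_gt (hφf p.2)
      constructor
      · intro h1 h2
        rw [h2, zero_mul] at hE
        rcases mul_eq_zero.1 hE.symm with h | h
        · exact hγne h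
        · rcases mul_eq_zero.1 h with h' | h'
          · exact h1 h'
          · exact hf1 h'
      · intro h2 h1
        rw [h1, zero_mul, mul_zero] at hE
        rcases mul_eq_zero.1 hE with h | h
        · exact h2 h
        · exact hf2 h
    obtain ⟨c0, hc0⟩ : ∃ c0, d c0 ≠ 0 := by
      by_contra hno
      push_neg at hno
      exact hd (funext hno)
    obtain ⟨v0, hv0⟩ := c0.exists_rep
    intro v
    refine prop (fun x => d (K x) ≠ 0)
      (fun a b hab h => by show d (K b) ≠ 0; rw [← hab]; exact h)
      hQS v0 (by show d (K v0) ≠ 0; rw [show K v0 = c0 from hv0]; exact hc0) v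
  
  -- assemble the eigenvectors
  choose u hupos hueig using key HP hHP Λ (entry γ HP hHPdef) hΛ
  choose u' hupos' hueig' using key HP' hHP' Λ' (entry γ' HP' hHPdef') hΛ'
  set φf : Fin V → ℝ := fun v => u (K v) ⟨v, rfl⟩ with hφfdef
  set φf' : Fin V → ℝ := fun v => u' (K v) ⟨v, rfl⟩ with hφfdef'
  have hφfpos : ∀ v, 0 < φf v := fun v => hupos (K v) ⟨v, rfl⟩
  have hφfpos' : ∀ v, 0 < φf' v := fun v => hupos' (K v) ⟨v, rfl⟩
  obtain ⟨d, hd0, hdcons⟩ := coef γ φf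
  obtain ⟨d', hd0', hdcons'⟩ := coef γ' φf'
  have hdnz : ∀ v, d (K v) ≠ 0 := nonvanish γ hγ φf hφfpos d hd0 hdcons
  have hdnz' : ∀ v, d' (K v) ≠ 0 := nonvanish γ' hγ' φf' hφfpos' d' hd0' hdcons'
  set ψ : Fin V → ℝ := fun v => d (K v) * φf v with hψdef
  set ψ' : Fin V → ℝ := fun v => d' (K v) * φf' v with hψdef'
  have hψnz : ∀ v, ψ v ≠ 0 := fun v => mul_ne_zero (hdnz v) (ne_of_gt (hφfpos v))
  have hψnz' : ∀ v, ψ' v ≠ 0 := fun v => mul_ne_zero (hdnz' v) (ne_of_gt (hφfpos' v))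
  have hcons : ∀ p ∈ S, ψ p.2 = γ p * ψ p.1 := fun p hp => hdcons p hp
  have hcons' : ∀ p ∈ S, ψ' p.2 = γ' p * ψ' p.1 := fun p hp => hdcons' p hp
  have hHPψ : HP *ᵥ ψ = Λ • ψ :=
    mkPsi HP Λ u (fun a b hab h => (entry γ HP hHPdef a b hab).1 h) hueig d
  have hHPψ' : HP' *ᵥ ψ' = Λ' • ψ' :=
    mkPsi HP' Λ' u' (fun a b hab h => (entry γ' HP' hHPdef' a b hab).1 h) hueig' d'
  have hHam : Ham G q *ᵥ ψ = Λ • ψ := by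
    have hBzero : (∑ r ∈ S, Bmat r.1 r.2 (γ r)) *ᵥ ψ = 0 := by
      rw [sum_mulVec']
      apply Finset.sum_eq_zero
      intro r hr
      exact Bmat_mulVec_zero r.1 r.2 (ne_of_lt (hSlt r hr)) (γ r)
        (ne_of_lt (hγ r hr)) ψ (hcons r hr)
    have hHam2 : Ham G q = HP - ∑ r ∈ S, Bmat r.1 r.2 (γ r) := by rw [hHPdef]; abel
    rw [hHam2, Matrix.sub_mulVec, hBzero, sub_zero, hHPψ]
  have hHam' : Ham G q *ᵥ ψ' = Λ' • ψ' := by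
    have hBzero : (∑ r ∈ S, Bmat r.1 r.2 (γ' r)) *ᵥ ψ' = 0 := by
      rw [sum_mulVec']
      apply Finset.sum_eq_zero
      intro r hr
      exact Bmat_mulVec_zero r.1 r.2 (ne_of_lt (hSlt r hr)) (γ' r)
        (ne_of_lt (hγ' r hr)) ψ' (hcons' r hr)
    have hHam2 : Ham G q = HP' - ∑ r ∈ S, Bmat r.1 r.2 (γ' r) := by rw [hHPdef']; abel
    rw [hHam2, Matrix.sub_mulVec, hBzero, sub_zero, hHPψ']
  -- the two ground-state eigenvalues coincide
  let v0 : Fin V := Classical.arbitrary _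
  have hsign : ∀ v, 0 < (d (K v) * d' (K v)) * (d (K v0) * d' (K v0)) := by
    have hbase : 0 < (d (K v0) * d' (K v0)) * (d (K v0) * d' (K v0)) :=
      mul_self_pos.2 (mul_ne_zero (hdnz v0) (hdnz' v0))
    intro v
    refine prop (fun x => 0 < (d (K x) * d' (K x)) * (d (K v0) * d' (K v0)))
      (fun a b hab h => by
        show 0 < (d (K b) * d' (K b)) * (d (K v0) * d' (K v0))
        rw [← hab]; exact h) ?_ v0 hbase v
    intro p hp
    have hEa := hdcons p hp
    have hEb := hdcons' p hp
    have hE2 : (d (K p.2) * φf p.2) * (d' (K p.2) * φf' p.2)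
        = (γ p * (d (K p.1) * φf p.1)) * (γ' p * (d' (K p.1) * φf' p.1)) := by
      rw [hEa, hEb]
    have hg : 0 < γ p * γ' p := mul_pos_of_neg_of_neg (hγ p hp) (hγ' p hp)
    have hf1 : 0 < φf p.1 * φf' p.1 := mul_pos (hφfpos p.1) (hφfpos' p.1)
    have hf2 : 0 < φf p.2 * φf' p.2 := mul_pos (hφfpos p.2) (hφfpos' p.2)
    set a1 := d (K p.1) * d' (K p.1) with ha1
    set a2 := d (K p.2) * d' (K p.2) with ha2
    set base := d (K v0) * d' (K v0) with hbase0
    have hE3 : a2 * (φf p.2 * φf' p.2) = (γ p * γ' p) * (a1 * (φf p.1 * φf' p.1)) := by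
      rw [ha1, ha2]
      linear_combination hE2
    constructor
    · intro h
      have h4 : 0 < (a2 * base) * (φf p.2 * φf' p.2) := by
        have hre : (a2 * base) * (φf p.2 * φf' p.2)
            = ((γ p * γ' p) * (φf p.1 * φf' p.1)) * (a1 * base) := by
          linear_combination base * hE3
        rw [hre]
        exact mul_pos (mul_pos hg hf1) h
      show 0 < a2 * base
      nlinarith [h4, hf2]
    · intro h
      have h4 : 0 < ((a1 * base) * ((γ p * γ' p) * (φf p.1 * φf' p.1))) := by
        have hre : (a1 * base) * ((γ p * γ' p) * (φf p.1 * φf' p.1))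
            = (a2 * base) * (φf p.2 * φf' p.2) := by
          linear_combination (-base) * hE3
        rw [hre]
        exact mul_pos h hf2
      show 0 < a1 * base
      nlinarith [h4, mul_pos hg hf1]
  have hdot : ψ ⬝ᵥ ψ' ≠ 0 := by
    have hpos : 0 < (d (K v0) * d' (K v0)) * (ψ ⬝ᵥ ψ') := by
      rw [dotProduct, Finset.mul_sum]
      apply Finset.sum_pos ?_ ⟨Classical.arbitrary _, Finset.mem_univ _⟩
      intro v _
      have h1 := hsign v
      have h2 := hφfpos v
      have h3 := hφfpos' v
      show 0 < (d (K v0) * d' (K v0)) * (ψ v * ψ' v)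
      have hψv : ψ v * ψ' v = (d (K v) * d' (K v)) * (φf v * φf' v) := by
        show (d (K v) * φf v) * (d' (K v) * φf' v) = _
        ring
      rw [hψv]
      have hff : 0 < φf v * φf' v := mul_pos h2 h3
      have hre : (d (K v0) * d' (K v0)) * ((d (K v) * d' (K v)) * (φf v * φf' v))
          = ((d (K v) * d' (K v)) * (d (K v0) * d' (K v0))) * (φf v * φf' v) := by ring
      rw [hre]
      exact mul_pos h1 hff
    intro h0
    rw [h0, mul_zero] at hpos
    exact lt_irrefl 0 hpos
  have hΛeq : Λ = Λ' := by
    have h1 : ψ ⬝ᵥ (Ham G q *ᵥ ψ') = (Ham G q *ᵥ ψ) ⬝ᵥ ψ' :=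
      dotProduct_mulVec_symm (Ham_isHermitian G q) ψ ψ'
    rw [hHam', hHam, dotProduct_smul, smul_dotProduct] at h1
    simp only [smul_eq_mul] at h1
    exact (mul_right_cancel₀ hdot (by linarith)).symm
  rw [← hΛeq] at hHam'
  -- simplicity of the spectrum gives proportionality
  have hinj : Function.Injective (Ham_isHermitian G q).eigenvalues := by
    intro i j hij
    set σ := Tuple.sort ((Ham_isHermitian G q).eigenvalues) with hσ
    have h := hGsimple (a₁ := σ.symm i) (a₂ := σ.symm j) (by
      show (Ham_isHermitian G q).eigenvalues (σ (σ.symm i))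
        = (Ham_isHermitian G q).eigenvalues (σ (σ.symm j))
      rw [Equiv.apply_symm_apply, Equiv.apply_symm_apply]
      exact hij)
    have := congrArg σ h
    rwa [Equiv.apply_symm_apply, Equiv.apply_symm_apply] at this
  obtain ⟨t, ht⟩ := eigenspace_one_dim (Ham_isHermitian G q) hinj hHam hHam'
    (fun h => hψnz v0 (congrFun h v0))
  have ht0 : t ≠ 0 := by
    intro h
    apply hψnz' v0
    rw [ht, h]
    simp
  -- conclude
  intro p hp
  have e1 := hcons p hp
  have e2 := hcons' p hp
  rw [ht] at e2
  simp only [Pi.smul_apply, smul_eq_mul] at e2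
  rw [e1] at e2
  have hcancel : γ p * (t * ψ p.1) = γ' p * (t * ψ p.1) := by linarith [e2]
  exact mul_right_cancel₀ (mul_ne_zero ht0 (hψnz p.1)) hcancel
end
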